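/- The complete bipartite-like union construction: the edge set of K_{4,4,4} can be partitioned into 3 subgraphs, each planar and triangle-free (girth at least 4). -/

import Mathlib

open SimpleGraph Set


/-- Cross product of two planar vectors. -/
def crR (a b : ℝ × ℝ) : ℝ := a.1 * b.2 - a.2 * b.1

def crZ (a b : ℤ × ℤ) : ℤ := a.1 * b.2 - a.2 * b.1

def toPt (p : ℤ × ℤ) : ℝ × ℝ := ((p.1 : ℝ), (p.2 : ℝ))

lemma toPt_inj : Function.Injective toPt := by
  intro a b h
  have h1 := congrArg Prod.fst h
  have h2 := congrArg Prod.snd h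
  simp only [toPt, Int.cast_injective.eq_iff] at h1 h2
  exact Prod.ext h1 h2

lemma crR_cast (a b c : ℤ × ℤ) :
    crR (toPt a - toPt b) (toPt c - toPt b) = ((crZ (a - b) (c - b) : ℤ) : ℝ) := by
  simp only [crR, crZ, toPt, Prod.fst_sub, Prod.snd_sub]
  push_cast
  ring

lemma crR_zero_of_mem_segment {A B P : ℝ × ℝ} (h : P ∈ segment ℝ A B) :
    crR (B - A) (P - A) = 0 := by
  rw [segment_eq_image'] at h
  obtain ⟨t, _, rfl⟩ := h
  simp only [crR, Prod.fst_sub, Prod.snd_sub, Prod.fst_add, Prod.snd_add, Prod.smul_fst,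
    Prod.smul_snd, smul_eq_mul]
  ring

lemma shared_endpoint {A B C : ℝ × ℝ} (h : crR (B - A) (C - A) ≠ 0) :
    segment ℝ A B ∩ segment ℝ A C ⊆ {A} := by
  rintro P ⟨h1, h2⟩
  rw [segment_eq_image'] at h1 h2
  obtain ⟨s, hs, hPs⟩ := h1
  obtain ⟨t, ht, hPt⟩ := h2
  have key : s • (B - A) = t • (C - A) := by
    have := hPs.trans hPt.symm
    exact add_left_cancel this
  have e1 : s * (B - A).1 = t * (C - A).1 := by
    have := congrArg Prod.fst key; simpa using this
  have e2 : s * (B - A).2 = t * (C - A).2 := by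
    have := congrArg Prod.snd key; simpa using this
  have hs0 : s * crR (B - A) (C - A) = 0 := by
    simp only [crR]
    linear_combination (C - A).2 * e1 - (C - A).1 * e2
  have : s = 0 := by
    rcases mul_eq_zero.mp hs0 with h' | h'
    · exact h'
    · exact absurd h' h
  subst this
  simp only [zero_smul, add_zero] at hPs
  simp [← hPs]

lemma separated {A B C D : ℝ × ℝ}
    (h : 0 < crR (B - A) (C - A) * crR (B - A) (D - A)) :
    segment ℝ A B ∩ segment ℝ C D = ∅ := by
  ext P
  simp only [mem_inter_iff, mem_empty_iff_false, iff_false, not_and]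
  intro h1 h2
  have hz : crR (B - A) (P - A) = 0 := crR_zero_of_mem_segment h1
  rw [segment_eq_image] at h2
  obtain ⟨t, ht, hPt⟩ := h2
  have hc : crR (B - A) (P - A) =
      (1 - t) * crR (B - A) (C - A) + t * crR (B - A) (D - A) := by
    subst hPt
    simp only [crR, Prod.fst_sub, Prod.snd_sub, Prod.fst_add, Prod.snd_add, Prod.smul_fst,
      Prod.smul_snd, smul_eq_mul]
    ring
  rw [hz] at hc
  rcases mul_pos_iff.mp h with ⟨p1, p2⟩ | ⟨n1, n2⟩
  · have a1 : 0 ≤ (1 - t) * crR (B - A) (C - A) := mul_nonneg (by linarith [ht.2]) p1.le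
    have a2 : 0 ≤ t * crR (B - A) (D - A) := mul_nonneg ht.1 p2.le
    have b1 : (1 - t) * crR (B - A) (C - A) = 0 := by linarith
    have b2 : t * crR (B - A) (D - A) = 0 := by linarith
    rcases mul_eq_zero.mp b1 with h' | h'
    · rcases mul_eq_zero.mp b2 with h'' | h''
      · linarith
      · linarith
    · linarith
  · have a1 : (1 - t) * crR (B - A) (C - A) ≤ 0 :=
      mul_nonpos_of_nonneg_of_nonpos (by linarith [ht.2]) n1.le
    have a2 : t * crR (B - A) (D - A) ≤ 0 := mul_nonpos_of_nonneg_of_nonpos ht.1 n2.le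
    have b1 : (1 - t) * crR (B - A) (C - A) = 0 := by linarith
    have b2 : t * crR (B - A) (D - A) = 0 := by linarith
    rcases mul_eq_zero.mp b1 with h' | h'
    · rcases mul_eq_zero.mp b2 with h'' | h''
      · linarith
      · linarith
    · linarith

/-- A simple graph is planar if it admits a drawing in the plane: an injective placement of
vertices together with, for each edge, a simple (injective continuous) arc joining its endpoints,
such that arcs pass through no other vertices and two distinct arcs meet only in common
endpoints. -/
def IsPlanar {V : Type*} (G : SimpleGraph V) : Prop :=
  ∃ (pos : V → ℝ × ℝ) (arc : V → V → Set (ℝ × ℝ)),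
    Function.Injective pos ∧
    (∀ u v, G.Adj u v →
      ∃ f : ℝ → ℝ × ℝ, ContinuousOn f (Set.Icc 0 1) ∧ Set.InjOn f (Set.Icc 0 1) ∧
        f 0 = pos u ∧ f 1 = pos v ∧ arc u v = f '' Set.Icc 0 1) ∧
    (∀ u v, arc u v = arc v u) ∧
    (∀ u v, G.Adj u v → ∀ w, pos w ∈ arc u v → w = u ∨ w = v) ∧
    (∀ u v u' v', G.Adj u v → G.Adj u' v' → s(u, v) ≠ s(u', v') →
      arc u v ∩ arc u' v' ⊆ ({pos u, pos v} : Set (ℝ × ℝ)) ∩ {pos u', pos v'})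

lemma isPlanar_of_int {V : Type*} (G : SimpleGraph V) (q : V → ℤ × ℤ)
    (h1 : Function.Injective q)
    (h2 : ∀ u v w : V, G.Adj u v → w ≠ u → w ≠ v → crZ (q v - q u) (q w - q u) ≠ 0)
    (h3 : ∀ u v a b : V, G.Adj u v → G.Adj a b → u ≠ a → u ≠ b → v ≠ a → v ≠ b →
      0 < crZ (q v - q u) (q a - q u) * crZ (q v - q u) (q b - q u) ∨
      0 < crZ (q b - q a) (q u - q a) * crZ (q b - q a) (q v - q a)) :
    IsPlanar G := by
  classical
  set pos : V → ℝ × ℝ := fun v => toPt (q v) with hpos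
  have hposinj : Function.Injective pos := toPt_inj.comp h1
  -- real versions of the hypotheses
  have H2 : ∀ u v w : V, G.Adj u v → w ≠ u → w ≠ v →
      crR (pos v - pos u) (pos w - pos u) ≠ 0 := by
    intro u v w ha hu hv
    rw [hpos]
    simp only [crR_cast]
    exact_mod_cast h2 u v w ha hu hv
  have H3 : ∀ u v a b : V, G.Adj u v → G.Adj a b → u ≠ a → u ≠ b → v ≠ a → v ≠ b →
      0 < crR (pos v - pos u) (pos a - pos u) * crR (pos v - pos u) (pos b - pos u) ∨
      0 < crR (pos b - pos a) (pos u - pos a) * crR (pos b - pos a) (pos v - pos a) := by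
    intro u v a b hu hv n1 n2 n3 n4
    rw [hpos]
    simp only [crR_cast, ← Int.cast_mul]
    rcases h3 u v a b hu hv n1 n2 n3 n4 with h | h
    · exact Or.inl (by exact_mod_cast h)
    · exact Or.inr (by exact_mod_cast h)
  refine ⟨pos, fun u v => segment ℝ (pos u) (pos v), hposinj, ?_, ?_, ?_, ?_⟩
  · -- arcs exist
    intro u v huv
    have hne : pos v - pos u ≠ 0 := by
      rw [sub_ne_zero]
      exact fun h => huv.ne' (hposinj h)
    refine ⟨fun t => pos u + t • (pos v - pos u), ?_, ?_, by simp, ?_, segment_eq_image' ℝ _ _⟩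
    · exact (continuous_const.add (continuous_id.smul continuous_const)).continuousOn
    · intro s _ t _ hst
      have : s • (pos v - pos u) = t • (pos v - pos u) := add_left_cancel hst
      have := sub_eq_zero.mpr this
      rw [← sub_smul] at this
      rcases smul_eq_zero.mp this with h | h
      · exact sub_eq_zero.mp h
      · exact absurd h hne
    · simp [one_smul]
  · intro u v
    exact segment_symm ℝ _ _
  · -- no vertex in the interior of an arc
    intro u v huv w hw
    by_contra hcon
    push_neg at hcon
    exact H2 u v w huv hcon.1 hcon.2 (crR_zero_of_mem_segment hw)
  · -- arcs meet only at common endpoints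
    intro u v u' v' huv hu'v' hs
    have hne : u ≠ v := huv.ne
    have hne' : u' ≠ v' := hu'v'.ne
    intro P hP
    simp only [Set.mem_inter_iff] at hP ⊢
    obtain ⟨hP1, hP2⟩ := hP
    by_cases e1 : u = u'
    · subst e1
      have e2 : v ≠ v' := fun h => hs (by rw [h])
      have hc := H2 u v v' huv (fun h => hne' h.symm) (Ne.symm e2)
      have := shared_endpoint hc ⟨hP1, hP2⟩
      simp only [mem_singleton_iff] at this
      subst this
      exact ⟨by simp, by simp⟩
    · by_cases e2 : u = v'
      · subst e2
        have e3 : v ≠ u' := by rintro rfl; exact hs Sym2.eq_swap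
        have hc := H2 u v u' huv hne' (Ne.symm e3)
        rw [segment_symm ℝ (pos u') (pos u)] at hP2
        have := shared_endpoint hc ⟨hP1, hP2⟩
        simp only [mem_singleton_iff] at this
        subst this
        exact ⟨by simp, by simp⟩
      · by_cases e3 : v = u'
        · subst e3
          have hc := H2 v u v' huv.symm (Ne.symm hne') (fun h => e2 h.symm)
          rw [segment_symm ℝ (pos u) (pos v)] at hP1
          have := shared_endpoint hc ⟨hP1, hP2⟩
          simp only [mem_singleton_iff] at this
          subst this
          exact ⟨by simp, by simp⟩
        · by_cases e4 : v = v'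
          · subst e4
            have hc := H2 v u u' huv.symm hne' (Ne.symm e1)
            rw [segment_symm ℝ (pos u) (pos v)] at hP1
            rw [segment_symm ℝ (pos u') (pos v)] at hP2
            have := shared_endpoint hc ⟨hP1, hP2⟩
            simp only [mem_singleton_iff] at this
            subst this
            exact ⟨by simp, by simp⟩
          · rcases H3 u v u' v' huv hu'v' e1 e2 e3 e4 with h | h
            · exact absurd (mem_inter hP1 hP2) (by rw [separated h]; exact notMem_empty P)
            · exact absurd (mem_inter hP2 hP1) (by rw [separated h]; exact notMem_empty P)


abbrev Vtx := (Σ _ : Fin 3, Fin 4)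

def diffOK : Fin 3 → Fin 3 → Fin 4 → Bool
  | 0, 0, d => d = 0 || d = 1
  | 0, 1, d => d = 0
  | 0, 2, d => d = 1
  | 1, 0, d => d = 2
  | 1, 1, d => d = 1 || d = 2
  | 1, 2, d => d = 2
  | 2, 0, d => d = 3
  | 2, 1, d => d = 3
  | 2, 2, d => d = 0 || d = 3

/-- pair index for parts: (0,1) ↦ 0, (1,2) ↦ 1, (2,0) ↦ 2 -/
def gAdj (k : Fin 3) (a b : Vtx) : Bool :=
  (a.1 = 0 && b.1 = 1 && diffOK k 0 (b.2 - a.2)) ||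
  (b.1 = 0 && a.1 = 1 && diffOK k 0 (a.2 - b.2)) ||
  (a.1 = 1 && b.1 = 2 && diffOK k 1 (b.2 - a.2)) ||
  (b.1 = 1 && a.1 = 2 && diffOK k 1 (a.2 - b.2)) ||
  (a.1 = 2 && b.1 = 0 && diffOK k 2 (b.2 - a.2)) ||
  (b.1 = 2 && a.1 = 0 && diffOK k 2 (a.2 - b.2))

lemma gAdj_symm : ∀ (k : Fin 3) (a b : Vtx), gAdj k a b = gAdj k b a := by decide

lemma gAdj_irrefl : ∀ (k : Fin 3) (a : Vtx), gAdj k a a = false := by decide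

def g (k : Fin 3) : SimpleGraph Vtx where
  Adj a b := gAdj k a b = true
  symm := ⟨fun a b h => by
    have h' : gAdj k a b = true := h
    show gAdj k b a = true
    rw [← gAdj_symm k a b]
    exact h'⟩
  loopless := ⟨fun a h => by
    have h' : gAdj k a a = true := h
    rw [gAdj_irrefl k a] at h'
    exact Bool.false_ne_true h'⟩

instance (k : Fin 3) : DecidableRel (g k).Adj :=
  fun a b => inferInstanceAs (Decidable (gAdj k a b = true))

def coordsT : Fin 3 → Fin 3 → Fin 4 → ℤ × ℤ
  | 0, 0, 0 => (956, 275)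
  | 0, 0, 1 => (260, -984)
  | 0, 0, 2 => (-921, -329)
  | 0, 0, 3 => (-327, 983)
  | 0, 1, 0 => (477, 850)
  | 0, 1, 1 => (899, -454)
  | 0, 1, 2 => (-443, -897)
  | 0, 1, 3 => (-912, 473)
  | 0, 2, 0 => (349, -45)
  | 0, 2, 1 => (-177, -1563)
  | 0, 2, 2 => (-367, 2)
  | 0, 2, 3 => (180, 1568)
  | 1, 0, 0 => (-6, -406)
  | 1, 0, 1 => (-1560, 147)
  | 1, 0, 2 => (66, 364)
  | 1, 0, 3 => (1566, -114)
  | 1, 1, 0 => (943, 336)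
  | 1, 1, 1 => (273, -958)
  | 1, 1, 2 => (-989, -308)
  | 1, 1, 3 => (-329, 988)
  | 1, 2, 0 => (-850, 477)
  | 1, 2, 1 => (507, 918)
  | 1, 2, 2 => (897, -489)
  | 1, 2, 3 => (-502, -853)
  | 2, 0, 0 => (988, 280)
  | 2, 0, 1 => (310, -955)
  | 2, 0, 2 => (-916, -310)
  | 2, 0, 3 => (-266, 923)
  | 2, 1, 0 => (-276, -238)
  | 2, 1, 1 => (-1024, 1222)
  | 2, 1, 2 => (277, 235)
  | 2, 1, 3 => (992, -1198)
  | 2, 2, 0 => (474, 856)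
  | 2, 2, 1 => (903, -433)
  | 2, 2, 2 => (-444, -856)
  | 2, 2, 3 => (-852, 434)

def coords (k : Fin 3) (v : Vtx) : ℤ × ℤ := coordsT k v.1 v.2


set_option maxRecDepth 10000 in
lemma test_h1 : ∀ k : Fin 3, Function.Injective (coords k) := by decide

set_option maxRecDepth 10000 in
lemma test_h2 : ∀ (k : Fin 3) (u v w : Vtx), gAdj k u v = true → w ≠ u → w ≠ v →
    crZ (coords k v - coords k u) (coords k w - coords k u) ≠ 0 := by decide

set_option maxRecDepth 100000 in
set_option maxHeartbeats 4000000 in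
lemma test_h3 : ∀ (k : Fin 3) (u v a b : Vtx), gAdj k u v = true → gAdj k a b = true →
    u ≠ a → u ≠ b → v ≠ a → v ≠ b →
    0 < crZ (coords k v - coords k u) (coords k a - coords k u) *
        crZ (coords k v - coords k u) (coords k b - coords k u) ∨
    0 < crZ (coords k b - coords k a) (coords k u - coords k a) *
        crZ (coords k b - coords k a) (coords k v - coords k a) := by decide


lemma egirth_ge_four {V : Type*} {G : SimpleGraph V}
    (h : ∀ a b c : V, G.Adj a b → G.Adj b c → G.Adj c a → False) : 4 ≤ G.egirth := by
  rw [SimpleGraph.le_egirth]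
  intro a w hw
  have h3 := hw.three_le_length
  have hne : w.length ≠ 3 := by
    intro hlen
    cases w with
    | nil => simp at hlen
    | cons hab p =>
      cases p with
      | nil => simp at hlen
      | cons hbc q =>
        cases q with
        | nil => simp at hlen
        | cons hcd r =>
          simp only [SimpleGraph.Walk.length_cons, Nat.add_eq_right,
            Nat.add_eq_zero] at hlen
          have hr : r.length = 0 := by omega
          have := SimpleGraph.Walk.eq_of_length_eq_zero hr
          subst this
          exact h _ _ _ hab hbc hcd
  exact_mod_cast (by omega : 4 ≤ w.length)

set_option maxRecDepth 10000 in
lemma triangle_free : ∀ (k : Fin 3) (a b c : Vtx), gAdj k a b = true → gAdj k b c = true →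
    gAdj k c a = true → False := by decide

set_option maxRecDepth 10000 in
lemma g_disj : ∀ (i j : Fin 3) (a b : Vtx), i ≠ j → gAdj i a b = true →
    gAdj j a b = true → False := by decide

set_option maxRecDepth 10000 in
lemma g_cover : ∀ a b : Vtx, (∃ k : Fin 3, gAdj k a b = true) ↔ a.1 ≠ b.1 := by decide

/-- The edge set of `K_{4,4,4}` can be partitioned into 3 subgraphs, each planar with girth at
least four. -/
theorem decomposition_K444 :
    ∃ f : Fin 3 → SimpleGraph (Σ _ : Fin 3, Fin 4),
      (∀ i, IsPlanar (f i) ∧ 4 ≤ (f i).egirth) ∧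
      (∀ i j, i ≠ j → Disjoint (f i).edgeSet (f j).edgeSet) ∧
      (⨆ i, f i) = completeMultipartiteGraph (fun _ : Fin 3 => Fin 4) := by
  refine ⟨g, ?_, ?_, ?_⟩
  · intro i
    constructor
    · exact isPlanar_of_int (g i) (coords i) (test_h1 i)
        (fun u v w h hu hv => test_h2 i u v w h hu hv)
        (fun u v a b h h' n1 n2 n3 n4 => test_h3 i u v a b h h' n1 n2 n3 n4)
    · exact egirth_ge_four (fun a b c hab hbc hca => triangle_free i a b c hab hbc hca)
  · intro i j hij
    refine Set.disjoint_left.mpr ?_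
    intro e
    induction e using Sym2.ind with
    | _ a b =>
      intro hi hj
      rw [SimpleGraph.mem_edgeSet] at hi hj
      exact g_disj i j a b hij hi hj
  · ext a b
    rw [SimpleGraph.iSup_adj]
    show (∃ i, (g i).Adj a b) ↔ _
    simp only [SimpleGraph.comap_adj, SimpleGraph.top_adj]
    exact g_cover a b
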